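/- If λ ∈ ℝ is a real eigenvalue of a linear operator A on a complex Hilbert space, then the point ((2λ)/(λ²+1), (λ²-1)/(λ²+1)) belongs to DW_BCK^ℝ(A) and lies on the unit circle x² + z² = 1. Conversely, every point of DW_BCK^ℝ(A) on the unit circle arises this way from a real eigenvalue of A. -/

import Mathlib

variable {H : Type*} [NormedAddCommGroup H] [InnerProductSpace ℂ H]

/-- The conformal range (real Davis–Wielandt shell) in the BCK model. -/
noncomputable def DWR (A : H →ₗ[ℂ] H) : Set (ℝ × ℝ) :=
  {p : ℝ × ℝ | ∃ x : H, x ≠ 0 ∧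
      p = (2 * (inner ℂ x (A x) : ℂ).re / (‖A x‖ ^ 2 + ‖x‖ ^ 2),
           (‖A x‖ ^ 2 - ‖x‖ ^ 2) / (‖A x‖ ^ 2 + ‖x‖ ^ 2))}

set_option maxHeartbeats 1000000 in
/-- The asymptotic (unit-circle) points of the conformal range are exactly the
BCK images of the real eigenvalues of `A`. -/
theorem DWR_asymptotic_points (A : H →ₗ[ℂ] H) :
    (∀ lam : ℝ, (∃ x : H, x ≠ 0 ∧ A x = (lam : ℂ) • x) →
      ((2 * lam / (lam ^ 2 + 1), (lam ^ 2 - 1) / (lam ^ 2 + 1)) ∈ DWR A ∧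
        (2 * lam / (lam ^ 2 + 1)) ^ 2 + ((lam ^ 2 - 1) / (lam ^ 2 + 1)) ^ 2 = 1)) ∧
    (∀ p ∈ DWR A, p.1 ^ 2 + p.2 ^ 2 = 1 →
      ∃ lam : ℝ, (∃ x : H, x ≠ 0 ∧ A x = (lam : ℂ) • x) ∧
        p = (2 * lam / (lam ^ 2 + 1), (lam ^ 2 - 1) / (lam ^ 2 + 1))) := by
  constructor
  · rintro lam ⟨x, hx, hAx⟩
    have hx2 : (0:ℝ) < ‖x‖ ^ 2 := pow_pos (norm_pos_iff.mpr hx) 2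
    have hx2' : ‖x‖ ^ 2 ≠ 0 := ne_of_gt hx2
    have hl1 : lam ^ 2 + 1 ≠ 0 := by nlinarith [sq_nonneg lam]
    have hnorm : ‖A x‖ ^ 2 = lam ^ 2 * ‖x‖ ^ 2 := by
      rw [hAx, norm_smul, mul_pow]
      simp [sq_abs]
    have hinner : (inner ℂ x (A x) : ℂ).re = lam * ‖x‖ ^ 2 := by
      rw [hAx, inner_smul_right, inner_self_eq_norm_sq_to_K]
      simp [Complex.mul_re, ← Complex.ofReal_pow]
    constructor
    · refine ⟨x, hx, ?_⟩
      rw [hnorm, hinner, Prod.mk.injEq]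
      constructor <;> · field_simp
    · field_simp
      ring
  · rintro p ⟨x, hx, rfl⟩ hcirc
    have hx2 : (0:ℝ) < ‖x‖ ^ 2 := pow_pos (norm_pos_iff.mpr hx) 2
    have hx2' : ‖x‖ ^ 2 ≠ 0 := ne_of_gt hx2
    have hs : (0:ℝ) < ‖A x‖ ^ 2 + ‖x‖ ^ 2 := by nlinarith [sq_nonneg ‖A x‖]
    have hs' : ‖A x‖ ^ 2 + ‖x‖ ^ 2 ≠ 0 := ne_of_gt hs
    simp only at hcirc
    have key : (2 * (inner ℂ x (A x) : ℂ).re) ^ 2 = 4 * ‖A x‖ ^ 2 * ‖x‖ ^ 2 := by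
      field_simp at hcirc
      nlinarith [hcirc]
    by_cases hA0 : A x = 0
    · refine ⟨0, ⟨x, hx, by simp [hA0]⟩, ?_⟩
      rw [hA0, Prod.mk.injEq]
      constructor <;> simp <;> field_simp
    · have hre : (inner ℂ x (A x) : ℂ).re ^ 2 = ‖A x‖ ^ 2 * ‖x‖ ^ 2 := by nlinarith [key]
      have hcs : ‖(inner ℂ x (A x) : ℂ)‖ ≤ ‖x‖ * ‖A x‖ := norm_inner_le_norm x (A x)
      have hre_le : |(inner ℂ x (A x) : ℂ).re| ≤ ‖(inner ℂ x (A x) : ℂ)‖ := Complex.abs_re_le_norm _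
      have habs : ‖(inner ℂ x (A x) : ℂ)‖ = ‖x‖ * ‖A x‖ := by
        have h1 : |(inner ℂ x (A x) : ℂ).re| = ‖x‖ * ‖A x‖ := by
          have := abs_nonneg ((inner ℂ x (A x) : ℂ).re)
          nlinarith [sq_abs ((inner ℂ x (A x) : ℂ).re), norm_nonneg x, norm_nonneg (A x)]
        nlinarith [norm_nonneg ((inner ℂ x (A x)) : ℂ)]
      obtain ⟨r, hr0, hr⟩ := (norm_inner_eq_norm_iff hx hA0).mp habs
      have hinner : (inner ℂ x (A x) : ℂ) = r * (‖x‖:ℂ) ^ 2 := by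
        rw [hr, inner_smul_right, inner_self_eq_norm_sq_to_K]
        norm_cast
      have hnormA : ‖A x‖ ^ 2 = ‖r‖ ^ 2 * ‖x‖ ^ 2 := by
        rw [hr, norm_smul]; ring
      have hreval : (inner ℂ x (A x) : ℂ).re = r.re * ‖x‖ ^ 2 := by
        rw [hinner]
        simp [Complex.mul_re, ← Complex.ofReal_pow]
      have hsq : ‖r‖ ^ 2 = r.re ^ 2 + r.im ^ 2 := by
        rw [Complex.sq_norm, Complex.normSq_apply]; ring
      have e1 : (r.re * ‖x‖ ^ 2) ^ 2 = (r.re ^ 2 + r.im ^ 2) * ‖x‖ ^ 2 * ‖x‖ ^ 2 := by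
        rw [← hreval, hre, hnormA, hsq]
      have him2 : r.im ^ 2 = 0 := by
        nlinarith [e1, mul_pos hx2 hx2, sq_nonneg r.im]
      have him : r.im = 0 := by
        have := pow_eq_zero_iff (n := 2) (by norm_num) |>.mp him2
        exact this
      have hrr : (r.re : ℂ) = r :=
        Complex.ext (Complex.ofReal_re _) (by rw [Complex.ofReal_im, him])
      refine ⟨r.re, ⟨x, hx, by rw [hr, hrr]⟩, ?_⟩
      have hrn : ‖r‖ ^ 2 = r.re ^ 2 := by rw [hsq, him]; ring
      have hl1 : r.re ^ 2 + 1 ≠ 0 := by nlinarith [sq_nonneg r.re]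
      rw [hnormA, hrn, hreval, Prod.mk.injEq]
      have hd : r.re ^ 2 * ‖x‖ ^ 2 + ‖x‖ ^ 2 ≠ 0 := by positivity
      constructor <;> · rw [div_eq_div_iff hd hl1]; ring
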